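/- Let n ≥ 3 and let D_{2n} act on the free metabelian Lie algebra L_2 on u, v by ρ: u ↦ ξu, v ↦ ξ̄v (ξ = e^{2πi/n}) and τ: u ↔ v. Then the module of invariants (L_2')^{D_{2n}} is a free module of rank 1 over C[u,v]^{D_{2n}} = C[uv, u^n+v^n], freely generated by the element [v,u](ad^n(u) − ad^n(v)). -/

import Mathlib

open MvPolynomial

/-- The ideal of the free Lie algebra on two generators defining the free
metabelian Lie algebra. -/
noncomputable def metabelianLieIdeal :
    LieIdeal ℂ (FreeLieAlgebra ℂ (Fin 2)) :=
  LieSubmodule.lieSpan ℂ (FreeLieAlgebra ℂ (Fin 2))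
    {x | ∃ a b c d : FreeLieAlgebra ℂ (Fin 2), x = ⁅⁅a, b⁆, ⁅c, d⁆⁆}

/-- The free metabelian Lie algebra on two generators over `ℂ`. -/
abbrev FreeMetabelianLie2 : Type := FreeLieAlgebra ℂ (Fin 2) ⧸ metabelianLieIdeal

noncomputable def uLie : FreeMetabelianLie2 :=
  LieSubmodule.Quotient.mk' metabelianLieIdeal (FreeLieAlgebra.of ℂ 0)

noncomputable def vLie : FreeMetabelianLie2 :=
  LieSubmodule.Quotient.mk' metabelianLieIdeal (FreeLieAlgebra.of ℂ 1)


namespace FMLAux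

noncomputable section

def swapF (d : Fin 2 →₀ ℕ) : Fin 2 →₀ ℕ :=
  Finsupp.single 0 (d 1) + Finsupp.single 1 (d 0)

@[simp] lemma swapF_apply0 (d : Fin 2 →₀ ℕ) : swapF d 0 = d 1 := by
  simp [swapF, Finsupp.single_apply]

@[simp] lemma swapF_apply1 (d : Fin 2 →₀ ℕ) : swapF d 1 = d 0 := by
  simp [swapF, Finsupp.single_apply]

@[simp] lemma swapF_swapF (d : Fin 2 →₀ ℕ) : swapF (swapF d) = d := by
  ext i
  fin_cases i <;> simp

lemma fin2_decomp (d : Fin 2 →₀ ℕ) :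
    d = Finsupp.single 0 (d 0) + Finsupp.single 1 (d 1) := by
  ext i
  fin_cases i <;> simp [Finsupp.single_apply]

lemma mon2 (d : Fin 2 →₀ ℕ) (c : ℂ) :
    monomial d c = C c * X 0 ^ (d 0) * X 1 ^ (d 1) := by
  conv_lhs => rw [fin2_decomp d]
  rw [monomial_add_single, ← zero_add (Finsupp.single 0 (d 0)), monomial_add_single,
    monomial_zero']

def sig (a b : ℂ) : MvPolynomial (Fin 2) ℂ →ₐ[ℂ] MvPolynomial (Fin 2) ℂ :=
  aeval ![C a * X 0, C b * X 1]

def sw : MvPolynomial (Fin 2) ℂ →ₐ[ℂ] MvPolynomial (Fin 2) ℂ :=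
  aeval ![X 1, X 0]

lemma sig_monomial (a b : ℂ) (d : Fin 2 →₀ ℕ) (c : ℂ) :
    sig a b (monomial d c) = monomial d (a ^ (d 0) * b ^ (d 1) * c) := by
  rw [mon2 d c, mon2 d]
  simp only [sig, map_mul, map_pow, aeval_C, aeval_X, Matrix.cons_val_zero, Matrix.cons_val_one,
    Matrix.head_cons, algebraMap_eq]
  ring

lemma sw_monomial (d : Fin 2 →₀ ℕ) (c : ℂ) :
    sw (monomial d c) = monomial (swapF d) c := by
  rw [mon2 d c, mon2 (swapF d)]
  simp only [sw, map_mul, map_pow, aeval_C, aeval_X, Matrix.cons_val_zero, Matrix.cons_val_one,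
    Matrix.head_cons, algebraMap_eq, swapF_apply0, swapF_apply1]
  ring

lemma coeff_sig (a b : ℂ) (f : MvPolynomial (Fin 2) ℂ) (d : Fin 2 →₀ ℕ) :
    coeff d (sig a b f) = a ^ (d 0) * b ^ (d 1) * coeff d f := by
  induction f using MvPolynomial.induction_on' with
  | monomial e c =>
    rw [sig_monomial, coeff_monomial, coeff_monomial]
    rcases eq_or_ne e d with rfl | h
    · simp
    · simp [h]
  | add p q hp hq => simp [map_add, hp, hq, mul_add]

lemma coeff_sw (f : MvPolynomial (Fin 2) ℂ) (d : Fin 2 →₀ ℕ) :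
    coeff (swapF d) (sw f) = coeff d f := by
  induction f using MvPolynomial.induction_on' with
  | monomial e c =>
    rw [sw_monomial, coeff_monomial, coeff_monomial]
    congr 1
    simp only [eq_iff_iff]
    constructor
    · intro h; simpa using congrArg swapF h
    · intro h; rw [h]
  | add p q hp hq => simp [map_add, hp, hq]





def qp (n : ℕ) : ℕ → MvPolynomial (Fin 2) ℂ
  | 0 => 0
  | 1 => 1
  | (k+2) => (X 0 ^ n + X 1 ^ n) * qp n (k+1) - (X 0 * X 1) ^ n * qp n k

abbrev Adj (n : ℕ) : Subalgebra ℂ (MvPolynomial (Fin 2) ℂ) :=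
  Algebra.adjoin ℂ ({X 0 * X 1, X 0 ^ n + X 1 ^ n} : Set (MvPolynomial (Fin 2) ℂ))

lemma xmul_mem (n : ℕ) : (X 0 * X 1 : MvPolynomial (Fin 2) ℂ) ∈ Adj n :=
  Algebra.subset_adjoin (by simp)

lemma xpow_mem (n : ℕ) : (X 0 ^ n + X 1 ^ n : MvPolynomial (Fin 2) ℂ) ∈ Adj n :=
  Algebra.subset_adjoin (by simp)

lemma qp_mem (n : ℕ) : ∀ k, qp n k ∈ Adj n := by
  intro k
  induction k using Nat.strong_induction_on with
  | _ k ih =>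
    match k with
    | 0 => exact zero_mem _
    | 1 => exact one_mem _
    | (k+2) =>
      exact sub_mem (mul_mem (xpow_mem n) (ih (k+1) (by omega)))
        (mul_mem (pow_mem (xmul_mem n) n) (ih k (by omega)))

lemma qp_spec (n : ℕ) : ∀ k, qp n k * (X 0 ^ n - X 1 ^ n) =
    ((X 0 : MvPolynomial (Fin 2) ℂ) ^ n) ^ k - ((X 1 : MvPolynomial (Fin 2) ℂ) ^ n) ^ k := by
  intro k
  induction k using Nat.strong_induction_on with
  | _ k ih =>
    match k with
    | 0 => simp [qp]
    | 1 => simp [qp]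
    | (k+2) =>
      have h1 := ih (k+1) (by omega)
      have h0 := ih k (by omega)
      rw [qp, sub_mul, mul_assoc, mul_assoc, h1, h0]
      ring


lemma core (n : ℕ) : ∀ N (f : MvPolynomial (Fin 2) ℂ), f.support.card ≤ N →
    (∀ d, coeff d f ≠ 0 → d 0 ≡ d 1 [MOD n]) →
    (∀ d, coeff (swapF d) f = - coeff d f) →
    ∃ p ∈ Adj n, f = p * (X 0 ^ n - X 1 ^ n) := by
  intro N
  induction N with
  | zero =>
    intro f hcard _ _
    have : f = 0 := support_eq_empty.mp (Finset.card_eq_zero.mp (Nat.le_zero.mp hcard))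
    exact ⟨0, zero_mem _, by simp [this]⟩
  | succ N ih =>
    intro f hcard h1 h2
    rcases eq_or_ne f 0 with rfl | hf0
    · exact ⟨0, zero_mem _, by simp⟩
    -- find d in support with d 1 < d 0
    have hne : ∃ d, coeff d f ≠ 0 ∧ d 1 < d 0 := by
      obtain ⟨d, hd⟩ := support_nonempty.mpr hf0
      rw [mem_support_iff] at hd
      have hneq : d 0 ≠ d 1 := by
        intro h
        have hsd : swapF d = d := by
          ext i; fin_cases i <;> simp [h]
        have := h2 d
        rw [hsd] at this
        have h0 : coeff d f + coeff d f = 0 := by linear_combination this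
        exact hd (add_self_eq_zero.mp h0)
      rcases Nat.lt_or_ge (d 1) (d 0) with h | h
      · exact ⟨d, hd, h⟩
      · refine ⟨swapF d, ?_, ?_⟩
        · rw [h2 d]; simpa using hd
        · simp; omega
    obtain ⟨d, hd, hgt⟩ := hne
    have hmod := h1 d hd
    obtain ⟨k, hk⟩ : n ∣ d 0 - d 1 := (Nat.modEq_iff_dvd' hgt.le).mp hmod.symm
    have ha : d 0 = d 1 + n * k := by omega
    set c := coeff d f with hc
    set g : MvPolynomial (Fin 2) ℂ := monomial d c - monomial (swapF d) c with hgdef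
    have hdd : d ≠ swapF d := by
      intro h
      have : d 0 = (swapF d) 0 := by rw [← h]
      rw [swapF_apply0] at this
      omega
    have hg : g = (C c * (X 0 * X 1) ^ (d 1) * qp n k) * (X 0 ^ n - X 1 ^ n) := by
      rw [hgdef, mon2 d c, mon2 (swapF d) c, swapF_apply0, swapF_apply1, ha]
      linear_combination (-(C c * (X 0 * X 1 : MvPolynomial (Fin 2) ℂ) ^ d 1)) * qp_spec n k
    have hcg : ∀ e, coeff e g = (if d = e then c else 0) - (if swapF d = e then c else 0) := by
      intro e
      rw [hgdef, coeff_sub, coeff_monomial, coeff_monomial]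
    have e2 : ∀ e, (swapF d = swapF e) = (d = e) := by
      intro e
      apply propext
      exact ⟨fun h => by simpa using congrArg swapF h, fun h => by rw [h]⟩
    have e1 : ∀ e, (d = swapF e) = (swapF d = e) := by
      intro e
      apply propext
      exact ⟨fun h => by rw [h, swapF_swapF], fun h => by rw [← h, swapF_swapF]⟩
    have hganti : ∀ e, coeff (swapF e) g = - coeff e g := by
      intro e
      rw [hcg, hcg]
      simp only [e1 e, e2 e]
      ring
    -- coefficients of f - g
    have hfg_coeff : ∀ e, coeff e (f - g) = coeff e f - coeff e g := fun e => by rw [coeff_sub]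
    have hfgd : coeff d (f - g) = 0 := by
      rw [hfg_coeff, hcg, if_pos rfl, if_neg (Ne.symm hdd), ← hc]
      ring
    have hfgsd : coeff (swapF d) (f - g) = 0 := by
      rw [hfg_coeff, hcg, if_neg hdd, if_pos rfl, h2 d, ← hc]
      ring
    have hsub : (f - g).support ⊆ f.support \ {d, swapF d} := by
      intro e he
      rw [mem_support_iff] at he
      rw [Finset.mem_sdiff, Finset.mem_insert, Finset.mem_singleton]
      have hed : e ≠ d := fun h => he (h ▸ hfgd)
      have hesd : e ≠ swapF d := fun h => he (h ▸ hfgsd)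
      refine ⟨?_, fun h => h.elim hed hesd⟩
      rw [mem_support_iff]
      intro h0
      apply he
      rw [hfg_coeff, h0, hcg, if_neg (Ne.symm hed), if_neg (Ne.symm hesd)]
      ring
    have hdm : d ∈ f.support := mem_support_iff.mpr hd
    have hsdm : swapF d ∈ f.support := by
      rw [mem_support_iff, h2 d]
      simpa using hd
    have hpair : ({d, swapF d} : Finset (Fin 2 →₀ ℕ)) ⊆ f.support := by
      intro e he
      rw [Finset.mem_insert, Finset.mem_singleton] at he
      rcases he with rfl | rfl <;> assumption
    have hcard2 : ({d, swapF d} : Finset (Fin 2 →₀ ℕ)).card = 2 := Finset.card_pair hdd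
    have hcard' : (f - g).support.card ≤ N := by
      have := Finset.card_le_card hsub
      rw [Finset.card_sdiff_of_subset hpair, hcard2] at this
      omega
    have h1' : ∀ e, coeff e (f - g) ≠ 0 → e 0 ≡ e 1 [MOD n] := by
      intro e he
      rcases eq_or_ne e d with rfl | hed
      · exact hmod
      rcases eq_or_ne e (swapF d) with rfl | hesd
      · rw [swapF_apply0, swapF_apply1]; exact hmod.symm
      · apply h1
        intro h0
        apply he
        rw [hfg_coeff, h0, hcg, if_neg (Ne.symm hed), if_neg (Ne.symm hesd)]
        ring
    have h2' : ∀ e, coeff (swapF e) (f - g) = - coeff e (f - g) := by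
      intro e
      rw [hfg_coeff, hfg_coeff, h2 e, hganti e]
      ring
    obtain ⟨p', hp', hfgeq⟩ := ih (f - g) hcard' h1' h2'
    refine ⟨p' + C c * (X 0 * X 1) ^ (d 1) * qp n k, ?_, ?_⟩
    · exact add_mem hp' (mul_mem (mul_mem (by
        rw [← algebraMap_eq]; exact Subalgebra.algebraMap_mem _ c)
        (pow_mem (xmul_mem n) _)) (qp_mem n k))
    · have : f = (f - g) + g := by ring
      rw [this, hfgeq, hg]
      ring


@[simp] lemma sig_X0 (a b : ℂ) : sig a b (X 0) = C a * X 0 := by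
  simp [sig]

@[simp] lemma sig_X1 (a b : ℂ) : sig a b (X 1) = C b * X 1 := by
  simp [sig]

@[simp] lemma sw_X0 : sw (X 0) = X 1 := by simp [sw]

@[simp] lemma sw_X1 : sw (X 1) = X 0 := by simp [sw]

lemma sig_mem (n : ℕ) (a b : ℂ) (hab : a * b = 1) (han : a ^ n = 1)
    {p : MvPolynomial (Fin 2) ℂ} (hp : p ∈ Adj n) : sig a b p = p := by
  have hbn : b ^ n = 1 := by
    have := congrArg (· ^ n) hab
    simp only [mul_pow, one_pow] at this
    rw [han, one_mul] at this
    exact this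
  induction hp using Algebra.adjoin_induction with
  | mem x hx =>
    rcases hx with rfl | hx
    · rw [map_mul, sig_X0, sig_X1]
      rw [mul_mul_mul_comm, ← C_mul, hab, C_1, one_mul]
    · rw [Set.mem_singleton_iff] at hx
      subst hx
      rw [map_add, map_pow, map_pow, sig_X0, sig_X1, mul_pow, mul_pow, ← map_pow, ← map_pow,
        han, hbn]
      simp
  | algebraMap r => exact AlgHom.commutes _ r
  | add x y hx hy ihx ihy => rw [map_add, ihx, ihy]
  | mul x y hx hy ihx ihy => rw [map_mul, ihx, ihy]

lemma sw_mem (n : ℕ) {p : MvPolynomial (Fin 2) ℂ} (hp : p ∈ Adj n) : sw p = p := by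
  induction hp using Algebra.adjoin_induction with
  | mem x hx =>
    rcases hx with rfl | hx
    · rw [map_mul, sw_X0, sw_X1, mul_comm]
    · rw [Set.mem_singleton_iff] at hx
      subst hx
      rw [map_add, map_pow, map_pow, sw_X0, sw_X1, add_comm]
  | algebraMap r => exact AlgHom.commutes _ r
  | add x y hx hy ihx ihy => rw [map_add, ihx, ihy]
  | mul x y hx hy ihx ihy => rw [map_mul, ihx, ihy]

lemma sig_D (n : ℕ) (a b : ℂ) (han : a ^ n = 1) (hbn : b ^ n = 1) :
    sig a b (X 0 ^ n - X 1 ^ n) = X 0 ^ n - X 1 ^ n := by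
  rw [map_sub, map_pow, map_pow, sig_X0, sig_X1, mul_pow, mul_pow, ← map_pow, ← map_pow,
    han, hbn]
  simp

lemma sw_D (n : ℕ) : sw (X 0 ^ n - X 1 ^ n) = -(X 0 ^ n - X 1 ^ n) := by
  rw [map_sub, map_pow, map_pow, sw_X0, sw_X1]
  ring

lemma D_ne_zero (n : ℕ) (hn : 0 < n) : (X 0 ^ n - X 1 ^ n : MvPolynomial (Fin 2) ℂ) ≠ 0 := by
  intro h
  have := congrArg (coeff (Finsupp.single 0 n)) h
  rw [coeff_sub, coeff_zero, coeff_X_pow, coeff_X_pow] at this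
  have hne : ¬ (Finsupp.single (1 : Fin 2) n = Finsupp.single (0 : Fin 2) n) := by
    intro h'
    have := congrArg (fun s => s 0) h'
    simp [Finsupp.single_apply] at this
    omega
  rw [if_pos rfl, if_neg hne] at this
  norm_num at this


end

end FMLAux

open FMLAux in
/-- For `n ≥ 3`, the `D_{2n}`-invariants of the commutator ideal `L₂'` of the
free metabelian Lie algebra form a free rank-one module over
`ℂ[u,v]^{D_{2n}} = ℂ[uv, uⁿ+vⁿ]` generated by `[v,u](adⁿ(u) − adⁿ(v))`:
identifying `L₂'` with `ℂ[u,v]` via `Φ` (with `Φ(f) = [v,u]f(ad u, ad v)`),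
an element `w ∈ L₂'` is `ρ`- and `τ`-invariant iff `w = Φ(p·(uⁿ − vⁿ))` for a
unique `p ∈ ℂ[uv, uⁿ+vⁿ]`. -/
theorem freeMetabelianLie_invariants_free (n : ℕ) (hn : 3 ≤ n)
    (ξ : ℂ) (hξ : ξ = Complex.exp (2 * Real.pi * Complex.I / n))
    (ρL τL : FreeMetabelianLie2 →ₗ⁅ℂ⁆ FreeMetabelianLie2)
    (hρu : ρL uLie = ξ • uLie) (hρv : ρL vLie = (starRingEnd ℂ) ξ • vLie)
    (hτu : τL uLie = vLie) (hτv : τL vLie = uLie)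
    (Φ : MvPolynomial (Fin 2) ℂ →ₗ[ℂ] FreeMetabelianLie2)
    (hinj : Function.Injective Φ)
    (h1 : Φ 1 = ⁅vLie, uLie⁆)
    (hu : ∀ p, Φ (X 0 * p) = ⁅Φ p, uLie⁆)
    (hv : ∀ p, Φ (X 1 * p) = ⁅Φ p, vLie⁆)
    (hrange : LinearMap.range Φ =
      LieSubmodule.toSubmodule
        (⁅(⊤ : LieIdeal ℂ FreeMetabelianLie2),
          (⊤ : LieIdeal ℂ FreeMetabelianLie2)⁆ :
          LieIdeal ℂ FreeMetabelianLie2)) :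
    ∀ w : FreeMetabelianLie2,
      (w ∈ LieSubmodule.toSubmodule
          (⁅(⊤ : LieIdeal ℂ FreeMetabelianLie2),
            (⊤ : LieIdeal ℂ FreeMetabelianLie2)⁆ :
            LieIdeal ℂ FreeMetabelianLie2) ∧
        ρL w = w ∧ τL w = w) ↔
      ∃! p : MvPolynomial (Fin 2) ℂ,
        p ∈ Algebra.adjoin ℂ
            ({X 0 * X 1, X 0 ^ n + X 1 ^ n} : Set (MvPolynomial (Fin 2) ℂ)) ∧
        w = Φ (p * (X 0 ^ n - X 1 ^ n)) := by
  set ζ := (starRingEnd ℂ) ξ with hζ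
  have hn0 : n ≠ 0 := by omega
  have hprim : IsPrimitiveRoot ξ n := hξ ▸ Complex.isPrimitiveRoot_exp n hn0
  have hmul : ξ * ζ = 1 := by
    rw [hζ, hξ, ← Complex.exp_conj, ← Complex.exp_add]
    rw [show ((2 * (Real.pi : ℂ) * Complex.I / n) +
        (starRingEnd ℂ) (2 * (Real.pi : ℂ) * Complex.I / n)) = 0 by
      simp [map_div₀, map_mul, map_ofNat, Complex.conj_ofReal, Complex.conj_I, map_natCast]
      ring]
    exact Complex.exp_zero
  have hξ0 : ξ ≠ 0 := by
    intro h
    rw [h, zero_mul] at hmul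
    exact zero_ne_one hmul
  have hξn : ξ ^ n = 1 := hprim.pow_eq_one
  have hζn : ζ ^ n = 1 := by
    have h := congrArg (· ^ n) hmul
    simp only [mul_pow, one_pow] at h
    rwa [hξn, one_mul] at h
  have hmodeq : ∀ i j : ℕ, ξ ^ i = ξ ^ j → i ≡ j [MOD n] := by
    intro i j hij
    rcases Nat.le_total j i with h | h
    · have hone : ξ ^ (i - j) = 1 := by
        have h2 : ξ ^ (i - j) * ξ ^ j = 1 * ξ ^ j := by
          rw [← pow_add, Nat.sub_add_cancel h, hij, one_mul]
        exact mul_right_cancel₀ (pow_ne_zero _ hξ0) h2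
      exact ((Nat.modEq_iff_dvd' h).mpr ((hprim.pow_eq_one_iff_dvd _).mp hone)).symm
    · have hone : ξ ^ (j - i) = 1 := by
        have h2 : ξ ^ (j - i) * ξ ^ i = 1 * ξ ^ i := by
          rw [← pow_add, Nat.sub_add_cancel h, hij.symm, one_mul]
        exact mul_right_cancel₀ (pow_ne_zero _ hξ0) h2
      exact (Nat.modEq_iff_dvd' h).mpr ((hprim.pow_eq_one_iff_dvd _).mp hone)
  -- action of ρL on Φ
  have ρΦ : ∀ p, ρL (Φ p) = Φ (sig ξ ζ p) := by
    intro p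
    induction p using MvPolynomial.induction_on with
    | C a =>
      have hCa : (C a : MvPolynomial (Fin 2) ℂ) = a • 1 := by
        rw [smul_eq_C_mul, mul_one]
      have hsC : sig ξ ζ (C a) = C a := by simp [sig, algebraMap_eq]
      have hζξ : ζ * ξ = 1 := by rw [mul_comm]; exact hmul
      rw [hsC, hCa, map_smul, map_smul, h1, LieHom.map_lie, hρv, hρu,
        smul_lie, lie_smul, smul_smul, smul_smul, mul_assoc, hζξ, mul_one]
    | add p q ihp ihq =>
      rw [map_add, map_add, ihp, ihq, map_add, map_add]
    | mul_X p i ihp =>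
      fin_cases i
      · show ρL (Φ (p * X 0)) = Φ (sig ξ ζ (p * X 0))
        rw [mul_comm p (X 0), hu, LieHom.map_lie, ihp, hρu, lie_smul, ← hu, ← map_smul]
        congr 1
        rw [map_mul (sig ξ ζ) (X 0) p, sig_X0, smul_eq_C_mul]
        ring
      · show ρL (Φ (p * X 1)) = Φ (sig ξ ζ (p * X 1))
        rw [mul_comm p (X 1), hv, LieHom.map_lie, ihp, hρv, lie_smul, ← hv, ← map_smul]
        congr 1
        rw [map_mul (sig ξ ζ) (X 1) p, sig_X1, smul_eq_C_mul]
        ring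
  -- action of τL on Φ
  have τΦ : ∀ p, τL (Φ p) = - Φ (sw p) := by
    intro p
    induction p using MvPolynomial.induction_on with
    | C a =>
      have hCa : (C a : MvPolynomial (Fin 2) ℂ) = a • 1 := by
        rw [smul_eq_C_mul, mul_one]
      have hsC : sw (C a) = C a := by simp [sw, algebraMap_eq]
      rw [hsC, hCa, map_smul, map_smul, h1, LieHom.map_lie, hτv, hτu, ← lie_skew,
        smul_neg]
    | add p q ihp ihq =>
      rw [map_add, map_add, ihp, ihq, map_add, map_add, neg_add]
    | mul_X p i ihp =>
      fin_cases i
      · show τL (Φ (p * X 0)) = -Φ (sw (p * X 0))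
        rw [mul_comm p (X 0), hu, LieHom.map_lie, ihp, hτu, neg_lie, ← hv, map_mul sw (X 0) p, sw_X0]
      · show τL (Φ (p * X 1)) = -Φ (sw (p * X 1))
        rw [mul_comm p (X 1), hv, LieHom.map_lie, ihp, hτv, neg_lie, ← hu, map_mul sw (X 1) p, sw_X1]
  have hDne : (X 0 ^ n - X 1 ^ n : MvPolynomial (Fin 2) ℂ) ≠ 0 := D_ne_zero n (by omega)
  intro w
  constructor
  · rintro ⟨hw, hρw, hτw⟩
    rw [← hrange] at hw
    obtain ⟨f, rfl⟩ := hw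
    have hσ : sig ξ ζ f = f := hinj (by rw [← ρΦ f, hρw])
    have hswf : sw f = -f := hinj (by rw [map_neg, ← neg_neg (Φ (sw f)), ← τΦ f, hτw])
    have hcond1 : ∀ d : Fin 2 →₀ ℕ, coeff d f ≠ 0 → d 0 ≡ d 1 [MOD n] := by
      intro d hdne
      have hce := congrArg (coeff d) hσ
      rw [coeff_sig] at hce
      have hsc : ξ ^ d 0 * ζ ^ d 1 = 1 := by
        have hce2 : (ξ ^ d 0 * ζ ^ d 1) * coeff d f = 1 * coeff d f := by
          rw [one_mul]; exact hce
        exact mul_right_cancel₀ hdne hce2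
      apply hmodeq
      have h3 : ξ ^ d 0 * (ξ * ζ) ^ d 1 = ξ ^ d 1 * (ξ ^ d 0 * ζ ^ d 1) := by ring
      rw [hmul, one_pow, mul_one, hsc, mul_one] at h3
      exact h3
    have hcond2 : ∀ d : Fin 2 →₀ ℕ, coeff (swapF d) f = - coeff d f := by
      intro d
      have hce := congrArg (coeff (swapF d)) hswf
      rw [coeff_sw, coeff_neg] at hce
      linear_combination hce
    obtain ⟨p, hpA, hpf⟩ := core n f.support.card f le_rfl hcond1 hcond2
    refine ⟨p, ⟨hpA, by rw [hpf]⟩, ?_⟩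
    rintro q ⟨hqA, hq⟩
    have heq : q * (X 0 ^ n - X 1 ^ n) = p * (X 0 ^ n - X 1 ^ n) := by
      apply hinj
      rw [← hq, hpf]
    exact mul_right_cancel₀ hDne heq
  · rintro ⟨p, ⟨hpA, rfl⟩, -⟩
    refine ⟨?_, ?_, ?_⟩
    · rw [← hrange]
      exact ⟨_, rfl⟩
    · rw [ρΦ]
      congr 1
      rw [map_mul, sig_mem n ξ ζ hmul hξn hpA, sig_D n ξ ζ hξn hζn]
    · rw [τΦ, map_mul, sw_mem n hpA, sw_D n, mul_neg, map_neg, neg_neg]
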